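/- arXiv:1404.0785 — 2 statements merged into one kernel-verified Lean document; each statement's English description precedes it below -/
import Mathlib

section
/- Let L be the real Lie algebra of complex 4×4 matrices of the form [[x, u, v, i·w], [0, y, i·z, −conj(v)], [0, 0, −y, −conj(u)], [0, 0, 0, −x]] (x, y, z, w ∈ ℝ, u, v ∈ ℂ) under the commutator bracket, and let 𝔫 = {A ∈ L : x = 0, y = 0} be its derived algebra. Then 𝔫 is nilpotent and 3-step nilpotent: 𝔫' = [𝔫,𝔫] = {A ∈ 𝔫 : u = 0, z = 0} has real dimension 3; 𝔫^{(2)} = [𝔫,𝔫'] = {A ∈ 𝔫 : u = 0, v = 0, z = 0} has real dimension 1; and [𝔫, 𝔫^{(2)}] = 0. -/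
open Matrix

attribute [local instance 100] LieRing.ofAssociativeRing

/-- The matrix `[[x, u, v, i·w], [0, y, i·z, −v̄], [0, 0, −y, −ū], [0, 0, 0, −x]]`. -/
def matL (x y z w : ℝ) (u v : ℂ) : Matrix (Fin 4) (Fin 4) ℂ :=
  !![(x : ℂ), u, v, Complex.I * (w : ℂ);
     0, (y : ℂ), Complex.I * (z : ℂ), -(star v);
     0, 0, -(y : ℂ), -(star u);
     0, 0, 0, -(x : ℂ)]

/-- The set `𝔫 = {A ∈ L : x = 0, y = 0}`, the derived algebra of `L`. -/
def Nset : Set (Matrix (Fin 4) (Fin 4) ℂ) :=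
  {A | ∃ (z w : ℝ) (u v : ℂ), A = matL 0 0 z w u v}

noncomputable section
set_option maxHeartbeats 1000000

lemma matL_add (z w : ℝ) (u v : ℂ) (z' w' : ℝ) (u' v' : ℂ) :
    matL 0 0 z w u v + matL 0 0 z' w' u' v' = matL 0 0 (z+z') (w+w') (u+u') (v+v') := by
  ext i j
  fin_cases i <;> fin_cases j <;>
    simp [matL, Matrix.vecHead, Matrix.vecTail, Complex.ext_iff] <;>
    (try constructor) <;> first | trivial | (push_cast; ring)

lemma matL_smul (r : ℝ) (z w : ℝ) (u v : ℂ) :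
    r • matL 0 0 z w u v = matL 0 0 (r*z) (r*w) (r•u) (r•v) := by
  ext i j
  fin_cases i <;> fin_cases j <;>
    simp [matL, Matrix.vecHead, Matrix.vecTail, Complex.ext_iff, Complex.real_smul] <;>
    (try constructor) <;> first | trivial | (push_cast; ring)

lemma matL_zero : matL 0 0 0 0 0 0 = 0 := by
  ext i j; fin_cases i <;> fin_cases j <;> simp [matL, Matrix.vecHead, Matrix.vecTail]

lemma matL_bracket (z w : ℝ) (u v : ℂ) (z' w' : ℝ) (u' v' : ℂ) :
    ⁅matL 0 0 z w u v, matL 0 0 z' w' u' v'⁆ =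
      matL 0 0 0 (2 * (((starRingEnd ℂ) u * v').im - ((starRingEnd ℂ) u' * v).im)) 0
        (Complex.I * (u * (z':ℂ) - u' * (z:ℂ))) := by
  rw [Ring.lie_def]
  ext i j
  fin_cases i <;> fin_cases j <;>
    simp [matL, Matrix.mul_apply, Fin.sum_univ_four, Matrix.vecHead, Matrix.vecTail,
      Complex.ext_iff, Complex.mul_re, Complex.mul_im] <;>
    (try constructor) <;> first | trivial | ring

lemma matL_congr {z w : ℝ} {u v : ℂ} {z' w' : ℝ} {u' v' : ℂ}
    (hz : z = z') (hw : w = w') (hu : u = u') (hv : v = v') :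
    matL 0 0 z w u v = matL 0 0 z' w' u' v' := by
  rw [hz, hw, hu, hv]

lemma mem_Nset (z w : ℝ) (u v : ℂ) : matL 0 0 z w u v ∈ Nset := ⟨z, w, u, v, rfl⟩

lemma matL_w (z w : ℝ) (u v : ℂ) : ((matL 0 0 z w u v) 0 3).im = w := by
  simp [matL]

lemma matL_v (z w : ℝ) (u v : ℂ) : (matL 0 0 z w u v) 0 2 = v := by
  simp [matL]

/-- The Lie subalgebra `𝔫`. -/
def Nn : LieSubalgebra ℝ (Matrix (Fin 4) (Fin 4) ℂ) where
  carrier := Nset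
  add_mem' := by
    rintro a b ⟨z, w, u, v, rfl⟩ ⟨z', w', u', v', rfl⟩
    exact ⟨_, _, _, _, matL_add z w u v z' w' u' v'⟩
  zero_mem' := ⟨0, 0, 0, 0, matL_zero.symm⟩
  smul_mem' := by
    rintro r a ⟨z, w, u, v, rfl⟩
    exact ⟨_, _, _, _, matL_smul r z w u v⟩
  lie_mem' := by
    rintro a b ⟨z, w, u, v, rfl⟩ ⟨z', w', u', v', rfl⟩
    exact ⟨0, _, 0, _, matL_bracket z w u v z' w' u' v'⟩

/-- The first term of the lower central series, as a Lie submodule. -/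
def S1 : LieSubmodule ℝ Nn Nn where
  carrier := {A : Nn | ∃ (w : ℝ) (v : ℂ), (A : Matrix (Fin 4) (Fin 4) ℂ) = matL 0 0 0 w 0 v}
  add_mem' := by
    rintro a b ⟨w, v, ha⟩ ⟨w', v', hb⟩
    refine ⟨w + w', v + v', ?_⟩
    have : ((a + b : Nn) : Matrix (Fin 4) (Fin 4) ℂ) = (a : Matrix (Fin 4) (Fin 4) ℂ) + b := rfl
    rw [this, ha, hb, matL_add]
    norm_num
  zero_mem' := ⟨0, 0, by
    have : ((0 : Nn) : Matrix (Fin 4) (Fin 4) ℂ) = 0 := rfl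
    rw [this, matL_zero]⟩
  smul_mem' := by
    rintro r a ⟨w, v, ha⟩
    refine ⟨r * w, r • v, ?_⟩
    have : ((r • a : Nn) : Matrix (Fin 4) (Fin 4) ℂ) = r • (a : Matrix (Fin 4) (Fin 4) ℂ) := rfl
    rw [this, ha, matL_smul]
    norm_num
  lie_mem := by
    rintro x m ⟨w', v', hm⟩
    obtain ⟨z, w, u, v, hx⟩ := x.2
    refine ⟨2 * (((starRingEnd ℂ) u * v').im - ((starRingEnd ℂ) 0 * v).im),
      Complex.I * (u * (((0:ℝ)):ℂ) - 0 * ((z:ℝ):ℂ)), ?_⟩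
    rw [LieSubalgebra.coe_bracket, hx, hm, matL_bracket]

/-- The second term of the lower central series, as a Lie submodule. -/
def S2 : LieSubmodule ℝ Nn Nn where
  carrier := {A : Nn | ∃ w : ℝ, (A : Matrix (Fin 4) (Fin 4) ℂ) = matL 0 0 0 w 0 0}
  add_mem' := by
    rintro a b ⟨w, ha⟩ ⟨w', hb⟩
    refine ⟨w + w', ?_⟩
    have : ((a + b : Nn) : Matrix (Fin 4) (Fin 4) ℂ) = (a : Matrix (Fin 4) (Fin 4) ℂ) + b := rfl
    rw [this, ha, hb, matL_add]
    norm_num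
  zero_mem' := ⟨0, by
    have : ((0 : Nn) : Matrix (Fin 4) (Fin 4) ℂ) = 0 := rfl
    rw [this, matL_zero]⟩
  smul_mem' := by
    rintro r a ⟨w, ha⟩
    refine ⟨r * w, ?_⟩
    have : ((r • a : Nn) : Matrix (Fin 4) (Fin 4) ℂ) = r • (a : Matrix (Fin 4) (Fin 4) ℂ) := rfl
    rw [this, ha, matL_smul]
    norm_num
  lie_mem := by
    rintro x m ⟨w', hm⟩
    obtain ⟨z, w, u, v, hx⟩ := x.2
    refine ⟨2 * (((starRingEnd ℂ) u * 0).im - ((starRingEnd ℂ) 0 * v).im), ?_⟩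
    rw [LieSubalgebra.coe_bracket, hx, hm, matL_bracket]
    congr 1 <;> simp

/-- Extraction of `(w, v)` from a matrix, as a linear map. -/
def extWV : Matrix (Fin 4) (Fin 4) ℂ →ₗ[ℝ] ℝ × ℂ where
  toFun A := ((A 0 3).im, A 0 2)
  map_add' A B := by simp [Matrix.add_apply, Prod.ext_iff]
  map_smul' r A := by
    simp [Matrix.smul_apply, Prod.ext_iff, Complex.smul_im]

lemma h1 : LieModule.lowerCentralSeries ℝ Nn Nn 1 = S1 := by
  rw [show (1 : ℕ) = 0 + 1 from rfl, LieModule.lowerCentralSeries_succ,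
    LieModule.lowerCentralSeries_zero]
  apply le_antisymm
  · rw [LieSubmodule.lie_le_iff]
    rintro x - m -
    obtain ⟨z, w, u, v, hx⟩ := x.2
    obtain ⟨z', w', u', v', hm⟩ := m.2
    refine ⟨2 * (((starRingEnd ℂ) u * v').im - ((starRingEnd ℂ) u' * v).im),
      Complex.I * (u * ((z':ℝ):ℂ) - u' * ((z:ℝ):ℂ)), ?_⟩
    rw [LieSubalgebra.coe_bracket, hx, hm, matL_bracket]
  · rintro m ⟨w, v, hm⟩
    set a1 : Nn := ⟨matL 0 0 0 0 1 0, mem_Nset _ _ _ _⟩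
    set b1 : Nn := ⟨matL 0 0 v.im 0 0 0, mem_Nset _ _ _ _⟩
    set a2 : Nn := ⟨matL 0 0 0 0 (-Complex.I) 0, mem_Nset _ _ _ _⟩
    set b2 : Nn := ⟨matL 0 0 v.re 0 0 0, mem_Nset _ _ _ _⟩
    set b3 : Nn := ⟨matL 0 0 0 0 0 (Complex.I * (w/2)), mem_Nset _ _ _ _⟩
    have key : m = ⁅a1, b1⁆ + ⁅a2, b2⁆ + ⁅a1, b3⁆ := by
      apply Subtype.ext
      have : ((⁅a1, b1⁆ + ⁅a2, b2⁆ + ⁅a1, b3⁆ : Nn) : Matrix (Fin 4) (Fin 4) ℂ)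
          = ⁅(a1 : Matrix (Fin 4) (Fin 4) ℂ), (b1 : Matrix (Fin 4) (Fin 4) ℂ)⁆
            + ⁅(a2 : Matrix (Fin 4) (Fin 4) ℂ), (b2 : Matrix (Fin 4) (Fin 4) ℂ)⁆
            + ⁅(a1 : Matrix (Fin 4) (Fin 4) ℂ), (b3 : Matrix (Fin 4) (Fin 4) ℂ)⁆ := rfl
      rw [hm, this]
      simp only [a1, b1, a2, b2, b3, matL_bracket, matL_add]
      refine matL_congr (by norm_num) ?_ (by norm_num) ?_
      · simp [Complex.mul_im, Complex.mul_re]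
        try ring
      · apply Complex.ext <;> simp [Complex.mul_im, Complex.mul_re] <;> ring
    rw [key]
    exact add_mem (add_mem (LieSubmodule.lie_mem_lie trivial trivial)
      (LieSubmodule.lie_mem_lie trivial trivial)) (LieSubmodule.lie_mem_lie trivial trivial)

lemma h2 : LieModule.lowerCentralSeries ℝ Nn Nn 2 = S2 := by
  rw [show (2 : ℕ) = 1 + 1 from rfl, LieModule.lowerCentralSeries_succ, h1]
  apply le_antisymm
  · rw [LieSubmodule.lie_le_iff]
    rintro x - m ⟨w', v', hm⟩
    obtain ⟨z, w, u, v, hx⟩ := x.2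
    refine ⟨2 * (((starRingEnd ℂ) u * v').im - ((starRingEnd ℂ) 0 * v).im), ?_⟩
    rw [LieSubalgebra.coe_bracket, hx, hm, matL_bracket]
    congr 1 <;> simp
  · rintro m ⟨w, hm⟩
    set a1 : Nn := ⟨matL 0 0 0 0 1 0, mem_Nset _ _ _ _⟩
    set b3 : Nn := ⟨matL 0 0 0 0 0 (Complex.I * (w/2)), mem_Nset _ _ _ _⟩
    have hb3 : b3 ∈ S1 := ⟨0, Complex.I * (w/2), rfl⟩
    have key : m = ⁅a1, b3⁆ := by
      apply Subtype.ext
      have : ((⁅a1, b3⁆ : Nn) : Matrix (Fin 4) (Fin 4) ℂ)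
          = ⁅(a1 : Matrix (Fin 4) (Fin 4) ℂ), (b3 : Matrix (Fin 4) (Fin 4) ℂ)⁆ := rfl
      rw [hm, this]
      simp only [a1, b3, matL_bracket]
      refine matL_congr rfl ?_ rfl ?_
      · simp [Complex.mul_im, Complex.mul_re]
        ring
      · simp
    rw [key]
    exact LieSubmodule.lie_mem_lie trivial hb3

lemma h3 : LieModule.lowerCentralSeries ℝ Nn Nn 3 = ⊥ := by
  rw [show (3 : ℕ) = 2 + 1 from rfl, LieModule.lowerCentralSeries_succ, h2]
  rw [eq_bot_iff, LieSubmodule.lie_le_iff]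
  rintro x - m ⟨w', hm⟩
  obtain ⟨z, w, u, v, hx⟩ := x.2
  rw [LieSubmodule.mem_bot]
  apply Subtype.ext
  rw [show ((0 : Nn) : Matrix (Fin 4) (Fin 4) ℂ) = 0 from rfl]
  rw [LieSubalgebra.coe_bracket, hx, hm, matL_bracket, ← matL_zero]
  congr 1 <;> simp

/-- Extraction of `w` from a matrix, as a linear map. -/
def extW : Matrix (Fin 4) (Fin 4) ℂ →ₗ[ℝ] ℝ where
  toFun A := (A 0 3).im
  map_add' A B := by simp [Matrix.add_apply]
  map_smul' r A := by simp [Matrix.smul_apply, Complex.smul_im]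

/-- Linear equivalence `S1 ≃ ℝ × ℂ`. -/
noncomputable def e1 : S1 ≃ₗ[ℝ] ℝ × ℂ := by
  refine LinearEquiv.ofBijective
    (extWV.comp (Nn.toSubmodule.subtype.comp (S1 : Submodule ℝ Nn).subtype)) ⟨?_, ?_⟩
  · intro a b hab
    obtain ⟨w, v, h⟩ := a.2
    obtain ⟨w', v', h'⟩ := b.2
    have ea : extWV (((a : Nn) : Matrix (Fin 4) (Fin 4) ℂ))
        = extWV (((b : Nn) : Matrix (Fin 4) (Fin 4) ℂ)) := hab
    rw [h, h'] at ea
    change ((matL 0 0 0 w 0 v 0 3).im, matL 0 0 0 w 0 v 0 2)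
      = ((matL 0 0 0 w' 0 v' 0 3).im, matL 0 0 0 w' 0 v' 0 2) at ea
    simp only [extWV, LinearMap.coe_mk, AddHom.coe_mk, matL_w, matL_v, Prod.mk.injEq] at ea
    apply Subtype.ext; apply Subtype.ext
    rw [h, h', ea.1, ea.2]
  · rintro ⟨w, v⟩
    exact ⟨⟨⟨matL 0 0 0 w 0 v, mem_Nset _ _ _ _⟩, ⟨w, v, rfl⟩⟩, by
      show ((matL 0 0 0 w 0 v 0 3).im, matL 0 0 0 w 0 v 0 2) = (w, v)
      rw [matL_w, matL_v]⟩

/-- Linear equivalence `S2 ≃ ℝ`. -/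
noncomputable def e2 : S2 ≃ₗ[ℝ] ℝ := by
  refine LinearEquiv.ofBijective
    (extW.comp (Nn.toSubmodule.subtype.comp (S2 : Submodule ℝ Nn).subtype)) ⟨?_, ?_⟩
  · intro a b hab
    obtain ⟨w, h⟩ := a.2
    obtain ⟨w', h'⟩ := b.2
    have ea : extW (((a : Nn) : Matrix (Fin 4) (Fin 4) ℂ))
        = extW (((b : Nn) : Matrix (Fin 4) (Fin 4) ℂ)) := hab
    rw [h, h'] at ea
    change (matL 0 0 0 w 0 0 0 3).im = (matL 0 0 0 w' 0 0 0 3).im at ea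
    simp only [extW, LinearMap.coe_mk, AddHom.coe_mk, matL_w] at ea
    apply Subtype.ext; apply Subtype.ext
    rw [h, h', ea]
  · intro w
    exact ⟨⟨⟨matL 0 0 0 w 0 0, mem_Nset _ _ _ _⟩, ⟨w, rfl⟩⟩, by
      show (matL 0 0 0 w 0 0 0 3).im = w
      rw [matL_w]⟩

/-- `𝔫` is a nilpotent real Lie algebra, which is 3-step nilpotent:
`𝔫' = [𝔫,𝔫] = {A ∈ 𝔫 : u = 0, z = 0}` has dimension 3, `𝔫⁽²⁾ = [𝔫,𝔫'] = {A ∈ 𝔫 : u = v = 0,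
z = 0}` has dimension 1, and `[𝔫,𝔫⁽²⁾] = 0`. -/
theorem stmt4 :
    ∃ N : LieSubalgebra ℝ (Matrix (Fin 4) (Fin 4) ℂ),
      (N : Set (Matrix (Fin 4) (Fin 4) ℂ)) = Nset ∧
      LieRing.IsNilpotent N ∧
      ((LieModule.lowerCentralSeries ℝ N N 1 : Set N)
          = {A : N | ∃ (w : ℝ) (v : ℂ),
              (A : Matrix (Fin 4) (Fin 4) ℂ) = matL 0 0 0 w 0 v}) ∧
      Module.finrank ℝ (LieModule.lowerCentralSeries ℝ N N 1) = 3 ∧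
      ((LieModule.lowerCentralSeries ℝ N N 2 : Set N)
          = {A : N | ∃ w : ℝ,
              (A : Matrix (Fin 4) (Fin 4) ℂ) = matL 0 0 0 w 0 0}) ∧
      Module.finrank ℝ (LieModule.lowerCentralSeries ℝ N N 2) = 1 ∧
      LieModule.lowerCentralSeries ℝ N N 3 = ⊥ := by
  refine ⟨Nn, rfl, LieModule.IsNilpotent.mk _ h3, ?_, ?_, ?_, ?_, h3⟩
  · rw [h1]; rfl
  · rw [h1]
    rw [e1.finrank_eq]
    simp [Module.finrank_prod, Complex.finrank_real_complex]
  · rw [h2]; rfl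
  · rw [h2]
    rw [e2.finrank_eq]
    simp
end
end

section
/- Let L be the real Lie algebra of complex 4×4 matrices of the form [[x, u, v, i·w], [0, y, i·z, −conj(v)], [0, 0, −y, −conj(u)], [0, 0, 0, −x]] (x, y, z, w ∈ ℝ, u, v ∈ ℂ) under the commutator bracket. Then L is completely solvable in the following sense: there exists a chain of Lie ideals 0 = I₀ ⊆ I₁ ⊆ I₂ ⊆ ⋯ ⊆ I₈ = L of L with dim_ℝ I_k = k for every k = 0, 1, …, 8. -/
open Matrix

attribute [local instance 100] LieRing.ofAssociativeRing

/-- The set `L` of all matrices of the above form. -/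
def Lset : Set (Matrix (Fin 4) (Fin 4) ℂ) :=
  {A | ∃ (x y z w : ℝ) (u v : ℂ), A = matL x y z w u v}

/-- Parametrization of `Lset` by 8 real coordinates, in the flag order
`w, Re v, Im v, z, Re u, Im u, y, x`. -/
def Φ (c : Fin 8 → ℝ) : Matrix (Fin 4) (Fin 4) ℂ :=
  matL (c 7) (c 6) (c 3) (c 0) (c 4 + c 5 * Complex.I) (c 1 + c 2 * Complex.I)

/-- The Lie bracket in the coordinates of `Φ`. -/
def br (c d : Fin 8 → ℝ) : Fin 8 → ℝ :=
  ![2*(c 7*d 0 - d 7*c 0) + 2*(d 5*c 1 - d 4*c 2) + 2*(d 2*c 4 - d 1*c 5),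
    (c 7+c 6)*d 1 - (d 7+d 6)*c 1 - (c 5*d 3 - d 5*c 3),
    (c 7+c 6)*d 2 - (d 7+d 6)*c 2 + (c 4*d 3 - d 4*c 3),
    2*(c 6*d 3 - d 6*c 3),
    (c 7-c 6)*d 4 - (d 7-d 6)*c 4,
    (c 7-c 6)*d 5 - (d 7-d 6)*c 5,
    0, 0]

@[simp] lemma br_0 (c d : Fin 8 → ℝ) :
    br c d 0 = 2*(c 7*d 0 - d 7*c 0) + 2*(d 5*c 1 - d 4*c 2) + 2*(d 2*c 4 - d 1*c 5) := rfl
@[simp] lemma br_1 (c d : Fin 8 → ℝ) :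
    br c d 1 = (c 7+c 6)*d 1 - (d 7+d 6)*c 1 - (c 5*d 3 - d 5*c 3) := rfl
@[simp] lemma br_2 (c d : Fin 8 → ℝ) :
    br c d 2 = (c 7+c 6)*d 2 - (d 7+d 6)*c 2 + (c 4*d 3 - d 4*c 3) := rfl
@[simp] lemma br_3 (c d : Fin 8 → ℝ) : br c d 3 = 2*(c 6*d 3 - d 6*c 3) := rfl
@[simp] lemma br_4 (c d : Fin 8 → ℝ) : br c d 4 = (c 7-c 6)*d 4 - (d 7-d 6)*c 4 := rfl
@[simp] lemma br_5 (c d : Fin 8 → ℝ) : br c d 5 = (c 7-c 6)*d 5 - (d 7-d 6)*c 5 := rfl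
@[simp] lemma br_6 (c d : Fin 8 → ℝ) : br c d 6 = 0 := rfl
@[simp] lemma br_7 (c d : Fin 8 → ℝ) : br c d 7 = 0 := rfl

set_option maxHeartbeats 2000000 in
lemma lie_Φ (c d : Fin 8 → ℝ) : ⁅Φ c, Φ d⁆ = Φ (br c d) := by
  rw [Ring.lie_def]
  ext i j
  fin_cases i <;> fin_cases j <;>
    simp [Φ, matL, Matrix.mul_apply, Fin.sum_univ_four, vecHead, vecTail] <;>
    (apply Complex.ext <;> simp [Complex.ext_iff] <;> ring)

set_option maxHeartbeats 1000000 in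
lemma Φ_add (c d : Fin 8 → ℝ) : Φ (c + d) = Φ c + Φ d := by
  ext i j
  fin_cases i <;> fin_cases j <;>
    simp [Φ, matL, Complex.ext_iff, vecHead, vecTail, Function.comp] <;> ring

set_option maxHeartbeats 1000000 in
lemma Φ_smul (r : ℝ) (c : Fin 8 → ℝ) : Φ (r • c) = r • Φ c := by
  ext i j
  fin_cases i <;> fin_cases j <;>
    simp [Φ, matL, Complex.ext_iff, Complex.real_smul, vecHead, vecTail, Function.comp]

lemma Φ_inj : Function.Injective Φ := by
  intro c d h
  have h00 := congrFun (congrFun h 0) 0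
  have h01 := congrFun (congrFun h 0) 1
  have h02 := congrFun (congrFun h 0) 2
  have h03 := congrFun (congrFun h 0) 3
  have h11 := congrFun (congrFun h 1) 1
  have h12 := congrFun (congrFun h 1) 2
  simp [Φ, matL, Complex.ext_iff, vecHead, vecTail, Function.comp] at h00 h01 h02 h03 h11 h12
  funext j
  fin_cases j <;> simp <;> tauto

/-- `L` as a Lie subalgebra of the 4×4 complex matrices (over ℝ). -/
def Lalg : LieSubalgebra ℝ (Matrix (Fin 4) (Fin 4) ℂ) where
  carrier := Set.range Φ
  add_mem' := by rintro a b ⟨c, rfl⟩ ⟨d, rfl⟩; exact ⟨c + d, Φ_add c d⟩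
  zero_mem' := ⟨0, by ext i j; fin_cases i <;> fin_cases j <;> simp [Φ, matL, vecHead, vecTail, Function.comp]⟩
  smul_mem' := by rintro r a ⟨c, rfl⟩; exact ⟨r • c, Φ_smul r c⟩
  lie_mem' := by rintro a b ⟨c, rfl⟩ ⟨d, rfl⟩; exact ⟨br c d, (lie_Φ c d).symm⟩

lemma mem_Lalg_iff (A : Matrix (Fin 4) (Fin 4) ℂ) : A ∈ Lalg ↔ ∃ c, Φ c = A := Iff.rfl

lemma Φ_matL (x y z w : ℝ) (u v : ℂ) :
    Φ ![w, v.re, v.im, z, u.re, u.im, y, x] = matL x y z w u v := by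
  have : Φ ![w, v.re, v.im, z, u.re, u.im, y, x] =
      matL x y z w ((u.re : ℂ) + (u.im : ℂ) * Complex.I)
        ((v.re : ℂ) + (v.im : ℂ) * Complex.I) := rfl
  rw [this, Complex.re_add_im, Complex.re_add_im]

lemma Lalg_coe : (Lalg : Set (Matrix (Fin 4) (Fin 4) ℂ)) = Lset := by
  ext A
  constructor
  · rintro ⟨c, rfl⟩
    exact ⟨c 7, c 6, c 3, c 0, c 4 + c 5 * Complex.I, c 1 + c 2 * Complex.I, rfl⟩
  · rintro ⟨x, y, z, w, u, v, rfl⟩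
    exact ⟨![w, v.re, v.im, z, u.re, u.im, y, x], Φ_matL x y z w u v⟩

/-- `Φ` as a linear map into `Lalg`. -/
def ψ : (Fin 8 → ℝ) →ₗ[ℝ] Lalg where
  toFun c := ⟨Φ c, ⟨c, rfl⟩⟩
  map_add' c d := Subtype.ext (Φ_add c d)
  map_smul' r c := Subtype.ext (Φ_smul r c)

lemma ψ_bij : Function.Bijective ψ := by
  constructor
  · intro c d h
    exact Φ_inj (congrArg Subtype.val h)
  · rintro ⟨A, c, rfl⟩
    exact ⟨c, rfl⟩

/-- Linear coordinates on `Lalg`. -/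
noncomputable def eΦ : (Fin 8 → ℝ) ≃ₗ[ℝ] Lalg := LinearEquiv.ofBijective ψ ψ_bij

@[simp] lemma eΦ_val (c : Fin 8 → ℝ) : ((eΦ c : Lalg) : Matrix (Fin 4) (Fin 4) ℂ) = Φ c := rfl

/-- The coordinate subspace of the first `n` coordinates. -/
def Z (n : ℕ) : Submodule ℝ (Fin 8 → ℝ) where
  carrier := {f | ∀ j : Fin 8, n ≤ (j : ℕ) → f j = 0}
  add_mem' := by intro a b ha hb j hj; simp [ha j hj, hb j hj]
  zero_mem' := by intro j hj; rfl
  smul_mem' := by intro r a ha j hj; simp [ha j hj]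

lemma mem_Z_iff (n : ℕ) (f : Fin 8 → ℝ) : f ∈ Z n ↔ ∀ j : Fin 8, n ≤ (j : ℕ) → f j = 0 :=
  Iff.rfl

lemma br_mem_Z (c d : Fin 8 → ℝ) (n : ℕ) (hd : d ∈ Z n) : br c d ∈ Z n := by
  intro j hj
  have H : ∀ i : Fin 8, (j : ℕ) ≤ (i : ℕ) → d i = 0 := fun i hi => hd i (hj.trans hi)
  clear hd hj
  fin_cases j
  · show br c d 0 = 0
    rw [br_0, H 0 (by decide), H 1 (by decide), H 2 (by decide),
      H 4 (by decide), H 5 (by decide), H 7 (by decide)]; ring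
  · show br c d 1 = 0
    rw [br_1, H 1 (by decide), H 3 (by decide), H 5 (by decide),
      H 6 (by decide), H 7 (by decide)]; ring
  · show br c d 2 = 0
    rw [br_2, H 2 (by decide), H 3 (by decide), H 4 (by decide),
      H 6 (by decide), H 7 (by decide)]; ring
  · show br c d 3 = 0
    rw [br_3, H 3 (by decide), H 6 (by decide)]; ring
  · show br c d 4 = 0
    rw [br_4, H 4 (by decide), H 6 (by decide), H 7 (by decide)]; ring
  · show br c d 5 = 0
    rw [br_5, H 5 (by decide), H 6 (by decide), H 7 (by decide)]; ring
  · exact br_6 c d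
  · exact br_7 c d

/-- The flag of ideals. -/
noncomputable def Iflag (k : Fin 9) : LieIdeal ℝ Lalg where
  toSubmodule := (Z (k : ℕ)).map (eΦ : (Fin 8 → ℝ) →ₗ[ℝ] Lalg)
  lie_mem := by
    rintro x m ⟨d, hd, rfl⟩
    refine ⟨br (eΦ.symm x) d, br_mem_Z _ d _ hd, ?_⟩
    apply Subtype.ext
    rw [LieSubalgebra.coe_bracket]
    conv_rhs => rw [← eΦ.apply_symm_apply x]
    exact (lie_Φ (eΦ.symm x) d).symm

/-- Extension by zero of the first `n` coordinates. -/
def extMap (n : ℕ) : (Fin n → ℝ) →ₗ[ℝ] (Fin 8 → ℝ) where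
  toFun d := fun j => if h : (j : ℕ) < n then d ⟨j, h⟩ else 0
  map_add' a b := by funext j; by_cases h : (j : ℕ) < n <;> simp [h]
  map_smul' r a := by funext j; by_cases h : (j : ℕ) < n <;> simp [h]

lemma extMap_inj {n : ℕ} (hn : n ≤ 8) : Function.Injective (extMap n) := by
  intro a b h
  funext i
  have := congrFun h ⟨(i : ℕ), lt_of_lt_of_le i.isLt hn⟩
  simpa [extMap, i.isLt] using this

lemma range_extMap {n : ℕ} (hn : n ≤ 8) : LinearMap.range (extMap n) = Z n := by
  apply le_antisymm
  · rintro _ ⟨d, rfl⟩ j hj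
    simp [extMap, Nat.not_lt.mpr hj]
  · intro f hf
    refine ⟨fun i => f ⟨(i : ℕ), lt_of_lt_of_le i.isLt hn⟩, funext fun j => ?_⟩
    by_cases h : (j : ℕ) < n
    · simp [extMap, h]
    · simp [extMap, h, (hf j (Nat.not_lt.mp h)).symm]

lemma finrank_Z {n : ℕ} (hn : n ≤ 8) : Module.finrank ℝ (Z n) = n := by
  rw [← range_extMap hn, LinearMap.finrank_range_of_inj (extMap_inj hn),
    Module.finrank_fin_fun]

/-- `L` is a real Lie algebra which is completely solvable: it admits a complete
flag of Lie ideals `0 = I₀ ⊆ I₁ ⊆ ⋯ ⊆ I₈ = L` with `dim_ℝ I_k = k`. -/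
theorem stmt5 :
    ∃ Lalg : LieSubalgebra ℝ (Matrix (Fin 4) (Fin 4) ℂ),
      (Lalg : Set (Matrix (Fin 4) (Fin 4) ℂ)) = Lset ∧
      ∃ I : Fin 9 → LieIdeal ℝ Lalg,
        Monotone I ∧ I 0 = ⊥ ∧ I 8 = ⊤ ∧
        ∀ k : Fin 9, Module.finrank ℝ (I k) = (k : ℕ) := by
  refine ⟨Lalg, Lalg_coe, Iflag, ?_, ?_, ?_, ?_⟩
  · intro a b hab
    intro x hx
    obtain ⟨d, hd, rfl⟩ := hx
    exact ⟨d, fun j hj => hd j (le_trans hab hj), rfl⟩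
  · apply LieSubmodule.ext
    intro x
    simp only [LieSubmodule.mem_bot]
    constructor
    · rintro ⟨d, hd, rfl⟩
      have : d = 0 := funext fun j => hd j (Nat.zero_le _)
      simp [this]
    · rintro rfl
      exact ⟨0, fun j _ => rfl, by simp⟩
  · apply LieSubmodule.ext
    intro x
    simp only [LieSubmodule.mem_top, iff_true]
    exact ⟨eΦ.symm x, fun j hj => absurd j.isLt (by omega), by simp⟩
  · intro k
    have : Module.finrank ℝ (Iflag k) =
        Module.finrank ℝ ((Z (k : ℕ)).map (eΦ : (Fin 8 → ℝ) →ₗ[ℝ] Lalg)) := rfl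
    rw [this, LinearEquiv.finrank_map_eq, finrank_Z (by omega : (k : ℕ) ≤ 8)]
end
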